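/- If a countable group G admits a faithful action by orientation-preserving homeomorphisms on the circle, then G admits a left-invariant circular order. -/

import Mathlib

/-- A circular order on `S`, following Calegari: for each `p` a strict total
order on `S \ {p}`, any two of which differ by a cut, together with the
three-element (cyclicity) condition. `o p x y` means `x <_p y`. -/
def IsCircularOrderFam {S : Type*} (o : S → S → S → Prop) : Prop :=
  (∀ p x y, o p x y → x ≠ p ∧ y ≠ p ∧ x ≠ y) ∧
  (∀ p x y, x ≠ p → y ≠ p → x ≠ y → o p x y ∨ o p y x) ∧
  (∀ p x y, o p x y → ¬ o p y x) ∧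
  (∀ p x y z, o p x y → o p y z → o p x z) ∧
  (∀ p x y, o p x y → o y p x) ∧
  (∀ p q x y, p ≠ q → x ≠ p → x ≠ q → y ≠ p → y ≠ q → x ≠ y →
    ((o p x q → o p q y → o q y x) ∧ (o p x y → ¬(o p x q ∧ o p q y) → o q x y)))

namespace Stmt19Aux

/-! ### Generic circular order helpers -/

section CircHelpers
variable {α : Type*} [CircularOrder α]

lemma sbtw_not_swap {a b c : α} (h : sbtw a b c) : ¬ sbtw a c b := by
  intro h'
  exact (sbtw_iff_not_btw.mp h') (btw_cyclic_left (btw_of_sbtw h))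

lemma sbtw_total' {a b c : α} (hab : a ≠ b) (hbc : b ≠ c) (hac : a ≠ c) :
    sbtw a b c ∨ sbtw a c b := by
  rcases btw_total a b c with h | h
  · by_cases h' : btw c b a
    · right
      rw [sbtw_iff_not_btw]
      intro hbca
      have : b = c ∨ c = a ∨ a = b := btw_antisymm hbca (btw_cyclic_left (btw_cyclic_left h'))
      tauto
    · exact Or.inl (sbtw_of_btw_not_btw h h')
  · right
    rw [sbtw_iff_not_btw]
    intro hbca
    have : b = c ∨ c = a ∨ a = b := btw_antisymm hbca (btw_cyclic_left (btw_cyclic_left h))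
    tauto

end CircHelpers

/-! ### The fundamental domain map `phi : AddCircle 1 → [0,1)` -/

noncomputable def phi (u : AddCircle (1:ℝ)) : ℝ := (AddCircle.equivIco 1 0 u : ℝ)

lemma phi_mem (u : AddCircle (1:ℝ)) : phi u ∈ Set.Ico (0:ℝ) 1 := by
  have := (AddCircle.equivIco 1 0 u).2
  simpa [phi] using this

lemma coe_phi (u : AddCircle (1:ℝ)) : ((phi u : ℝ) : AddCircle (1:ℝ)) = u :=
  (AddCircle.equivIco 1 0).symm_apply_apply u

lemma phi_inj {u v : AddCircle (1:ℝ)} (h : phi u = phi v) : u = v := by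
  rw [← coe_phi u, ← coe_phi v, h]

lemma phi_zero : phi (0 : AddCircle (1:ℝ)) = 0 := by
  have h0 : ((0:ℝ) : AddCircle (1:ℝ)) = 0 := by norm_num
  have : phi ((0:ℝ) : AddCircle (1:ℝ)) = toIcoMod (zero_lt_one) 0 0 := rfl
  rw [h0] at this
  rw [this, toIcoMod_eq_self]
  constructor <;> norm_num

lemma phi_eq_zero_iff {u : AddCircle (1:ℝ)} : phi u = 0 ↔ u = 0 := by
  constructor
  · intro h
    rw [← coe_phi u, h]; norm_num
  · rintro rfl; exact phi_zero

lemma sbtw_zero_iff {u v : AddCircle (1:ℝ)} (hu : u ≠ 0) (hv : v ≠ 0) (huv : u ≠ v) :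
    sbtw (0 : AddCircle (1:ℝ)) u v ↔ phi u < phi v := by
  set a := phi u with ha
  set b := phi v with hb
  have hau : ((a:ℝ) : AddCircle (1:ℝ)) = u := coe_phi u
  have hbv : ((b:ℝ) : AddCircle (1:ℝ)) = v := coe_phi v
  have ha0 : 0 < a := lt_of_le_of_ne (phi_mem u).1 (fun h => hu (phi_eq_zero_iff.mp h.symm))
  have ha1 : a < 1 := (phi_mem u).2
  have hb0 : 0 < b := lt_of_le_of_ne (phi_mem v).1 (fun h => hv (phi_eq_zero_iff.mp h.symm))
  have hb1 : b < 1 := (phi_mem v).2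
  have hab : a ≠ b := fun h => huv (phi_inj h)
  have h0 : ((0:ℝ) : AddCircle (1:ℝ)) = 0 := by norm_num
  rw [← hau, ← hbv, ← h0]
  rw [sbtw_iff_btw_not_btw]
  rw [QuotientAddGroup.btw_coe_iff, QuotientAddGroup.btw_coe_iff]
  have e1 : toIcoMod (zero_lt_one) (0:ℝ) a = a := by
    rw [toIcoMod_eq_self]; constructor <;> simp [ha0.le, ha1]
  have e2 : toIocMod (zero_lt_one) (0:ℝ) b = b := by
    rw [toIocMod_eq_self]; constructor <;> simp [hb0, hb1.le]
  have e3 : toIocMod (zero_lt_one) b 0 = 1 := by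
    rw [toIocMod_eq_iff]
    refine ⟨⟨hb1, by linarith⟩, -1, by push_cast [zsmul_eq_mul]; ring⟩
  rw [e1, e2, e3]
  constructor
  · rintro ⟨hab', hnot⟩
    rcases lt_or_gt_of_ne hab with h | h
    · exact h
    · exfalso
      apply hnot
      have : toIcoMod (zero_lt_one) b a = a := by
        rw [toIcoMod_eq_self]; constructor
        · linarith
        · linarith
      rw [this]; linarith
  · intro h
    refine ⟨h.le, ?_⟩
    have : toIcoMod (zero_lt_one) b a = a + 1 := by
      rw [toIcoMod_eq_iff]
      refine ⟨⟨by linarith, by linarith⟩, -1, by push_cast [zsmul_eq_mul]; ring⟩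
    rw [this]
    push_neg
    linarith

/-! ### The group-side construction -/

noncomputable section
open Function

attribute [local instance] Classical.propDecidable

variable {G : Type*} [Group G] [Countable G]
variable (f : G →* Equiv.Perm (AddCircle (1:ℝ)))

def wit (a b : G) : AddCircle (1:ℝ) :=
  if h : (⇑(f a) : AddCircle (1:ℝ) → AddCircle (1:ℝ)) = ⇑(f b) then 0
  else (Function.ne_iff.mp h).choose

lemma wit_spec {a b : G} (h : (⇑(f a) : AddCircle (1:ℝ) → AddCircle (1:ℝ)) ≠ ⇑(f b)) :
    f a (wit f a b) ≠ f b (wit f a b) := by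
  rw [wit, dif_neg h]
  exact (Function.ne_iff.mp h).choose_spec

def en : ℕ → G × G := (exists_surjective_nat (G × G)).choose

lemma en_surj : Function.Surjective (en (G := G)) := (exists_surjective_nat (G × G)).choose_spec

def zseq (n : ℕ) : AddCircle (1:ℝ) := wit f (en n).1 (en n).2

variable {f}

lemma zsep (hinj : Function.Injective f) {a b : G} (hab : a ≠ b) :
    ∃ n, f a (zseq f n) ≠ f b (zseq f n) := by
  obtain ⟨n, hn⟩ := en_surj (G := G) (a, b)
  refine ⟨n, ?_⟩
  have h : (⇑(f a) : AddCircle (1:ℝ) → AddCircle (1:ℝ)) ≠ ⇑(f b) := by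
    intro h
    exact hab (hinj (Equiv.coe_inj.mp h))
  simp only [zseq, hn]
  exact wit_spec f h

variable (f) in
def Phi (x : G) : Lex (ℕ → ℝ) := toLex fun n => phi (f x (zseq f n))

lemma Phi_ne (hinj : Function.Injective f) {a b : G} (hab : a ≠ b) : Phi f a ≠ Phi f b := by
  obtain ⟨n, hn⟩ := zsep hinj hab
  intro h
  exact hn (phi_inj (congrFun (congrArg ofLex h) n))

lemma perm_mul_apply (g h : G) (u : AddCircle (1:ℝ)) : f (g * h) u = f g (f h u) := by
  rw [map_mul]; rfl

lemma perm_inv_apply (g : G) (u : AddCircle (1:ℝ)) : f g⁻¹ (f g u) = u := by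
  rw [← perm_mul_apply, inv_mul_cancel, map_one]; rfl

variable (hor : ∀ (g : G) (a b c : AddCircle (1 : ℝ)),
      sbtw a b c → sbtw (f g a) (f g b) (f g c))

include hor

lemma sbtw_iff (g : G) {a b c : AddCircle (1:ℝ)} :
    sbtw (f g a) (f g b) (f g c) ↔ sbtw a b c :=
  ⟨fun h => by simpa [perm_inv_apply] using hor g⁻¹ _ _ _ h, hor g a b c⟩

lemma mono0 {g : G} (hg : f g 0 = 0) {u v : AddCircle (1:ℝ)} (huv : u ≠ v) :
    phi u < phi v ↔ phi (f g u) < phi (f g v) := by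
  have hginj : Function.Injective (f g) := (f g).injective
  by_cases hu : u = 0
  · subst hu
    have hv : v ≠ 0 := Ne.symm huv
    have h1 : (0:ℝ) < phi v :=
      lt_of_le_of_ne (phi_mem v).1 (fun h => hv (phi_eq_zero_iff.mp h.symm))
    have h2 : f g v ≠ 0 := by
      rw [← hg]; exact fun h => hv (hginj h)
    have h3 : (0:ℝ) < phi (f g v) :=
      lt_of_le_of_ne (phi_mem _).1 (fun h => h2 (phi_eq_zero_iff.mp h.symm))
    rw [hg, phi_zero]
    exact iff_of_true h1 h3
  · by_cases hv : v = 0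
    · subst hv
      have l1 : ¬ phi u < phi 0 := by rw [phi_zero]; exact not_lt.mpr (phi_mem u).1
      have l2 : ¬ phi (f g u) < phi (f g 0) := by
        rw [hg, phi_zero]; exact not_lt.mpr (phi_mem _).1
      exact iff_of_false l1 l2
    · have h2 : f g u ≠ 0 := by rw [← hg]; exact fun h => hu (hginj h)
      have h3 : f g v ≠ 0 := by rw [← hg]; exact fun h => hv (hginj h)
      have h4 : f g u ≠ f g v := fun h => huv (hginj h)
      have hs : sbtw (f g 0) (f g u) (f g v) ↔ sbtw (0 : AddCircle (1:ℝ)) u v := sbtw_iff hor g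
      rw [hg] at hs
      rw [← sbtw_zero_iff hu hv huv, ← sbtw_zero_iff h2 h3 h4]
      exact hs.symm

lemma key {g h h' : G} (hg : f g 0 = 0) (hlt : Phi f h < Phi f h') :
    Phi f (g * h) < Phi f (g * h') := by
  have hlt' : ∃ i, (∀ j, j < i → phi (f h (zseq f j)) = phi (f h' (zseq f j))) ∧
      phi (f h (zseq f i)) < phi (f h' (zseq f i)) := hlt
  obtain ⟨i, hj, hi⟩ := hlt'
  show ∃ i, (∀ j, j < i → phi (f (g * h) (zseq f j)) = phi (f (g * h') (zseq f j))) ∧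
      phi (f (g * h) (zseq f i)) < phi (f (g * h') (zseq f i))
  refine ⟨i, ?_, ?_⟩
  · intro j hji
    have e : f h (zseq f j) = f h' (zseq f j) := phi_inj (hj j hji)
    rw [perm_mul_apply, perm_mul_apply, e]
  · have hne : f h (zseq f i) ≠ f h' (zseq f i) := fun e => (ne_of_lt hi) (congrArg phi e)
    rw [perm_mul_apply, perm_mul_apply]
    exact (mono0 hor hg hne).mp hi

lemma key_iff {g h h' : G} (hg : f g 0 = 0) :
    Phi f h < Phi f h' ↔ Phi f (g * h) < Phi f (g * h') := by
  constructor
  · exact key hor hg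
  · intro hlt
    have hg' : f g⁻¹ 0 = 0 := by
      have := perm_inv_apply (f := f) g 0
      rwa [hg] at this
    have := key hor hg' hlt
    simpa [inv_mul_cancel_left] using this

end

noncomputable section
open Function

attribute [local instance] Classical.propDecidable

variable {G : Type*} [Group G] [Countable G]
variable (f : G →* Equiv.Perm (AddCircle (1:ℝ)))

def tau (x : G) : AddCircle (1:ℝ) := f x 0

lemma tau_mul (g x : G) : tau f (g * x) = f g (tau f x) := perm_mul_apply g x 0

def lt' (x y : G) : Prop := Phi f 1 < Phi f (x⁻¹ * y)

def rnk (p x : G) : ℕ := if tau f x = tau f p then (if lt' f p x then 0 else 2) else 1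

def inr (p x y : G) : Prop :=
  if tau f x = tau f y then lt' f x y else sbtw (tau f p) (tau f x) (tau f y)

def core (p x y : G) : Prop :=
  rnk f p x < rnk f p y ∨ (rnk f p x = rnk f p y ∧ inr f p x y)

def oo (p x y : G) : Prop := x ≠ p ∧ y ≠ p ∧ x ≠ y ∧ core f p x y

variable {f}

lemma lt'_inv (g x y : G) : lt' f (g*x) (g*y) ↔ lt' f x y := by
  unfold lt'
  rw [mul_inv_rev, mul_assoc, inv_mul_cancel_left]

lemma lt'_irrefl (x : G) : ¬ lt' f x x := by
  rw [lt', inv_mul_cancel]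
  exact lt_irrefl _

lemma fix0 {x y : G} (h : tau f x = tau f y) : f (x⁻¹ * y) 0 = 0 := by
  unfold tau at h
  rw [perm_mul_apply, ← h, perm_inv_apply]

variable (hor : ∀ (g : G) (a b c : AddCircle (1 : ℝ)),
      sbtw a b c → sbtw (f g a) (f g b) (f g c))

include hor

lemma lt'_asymm {x y : G} (h : tau f x = tau f y) (h1 : lt' f x y) (h2 : lt' f y x) : False := by
  have hg : f (x⁻¹ * y) 0 = 0 := fix0 h
  have h3 := (key_iff hor hg).mp h2
  have e1 : (x⁻¹*y)*(y⁻¹*x) = 1 := by group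
  have e2 : (x⁻¹*y)*1 = x⁻¹*y := mul_one _
  rw [e1, e2] at h3
  exact lt_asymm h1 h3

lemma lt'_trans {x y z : G} (hxy : tau f x = tau f y) (hyz : tau f y = tau f z)
    (h1 : lt' f x y) (h2 : lt' f y z) : lt' f x z := by
  have hg : f (x⁻¹ * y) 0 = 0 := fix0 hxy
  have h3 := key hor hg h2
  have e1 : (x⁻¹*y)*(y⁻¹*z) = x⁻¹*z := by group
  rw [mul_one, e1] at h3
  exact lt_trans h1 h3

lemma lt'_total (hinj : Function.Injective f) {x y : G} (h : tau f x = tau f y) (hxy : x ≠ y) :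
    lt' f x y ∨ lt' f y x := by
  have hne : (1:G) ≠ x⁻¹ * y := fun e => hxy (inv_mul_eq_one.mp e.symm)
  rcases lt_trichotomy (Phi f 1) (Phi f (x⁻¹*y)) with h1 | h1 | h1
  · exact Or.inl h1
  · exact absurd h1 (Phi_ne hinj hne)
  · right
    have hg : f (y⁻¹ * x) 0 = 0 := fix0 h.symm
    have h3 := key hor hg h1
    have e1 : (y⁻¹*x)*(x⁻¹*y) = 1 := by group
    rw [e1, mul_one] at h3
    exact h3

lemma oo_asymm {p x y : G} (h1 : oo f p x y) (h2 : oo f p y x) : False := by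
  obtain ⟨_, _, _, hc⟩ := h1
  obtain ⟨_, _, _, hc'⟩ := h2
  rcases hc with h | ⟨he, hi⟩ <;> rcases hc' with h' | ⟨he', hi'⟩
  · omega
  · omega
  · omega
  · rw [inr] at hi hi'
    by_cases ht : tau f x = tau f y
    · rw [if_pos ht] at hi
      rw [if_pos ht.symm] at hi'
      exact lt'_asymm hor ht hi hi'
    · rw [if_neg ht] at hi
      rw [if_neg (Ne.symm ht)] at hi'
      exact sbtw_not_swap hi hi'

lemma oo_total (hinj : Function.Injective f) {p x y : G}
    (hxp : x ≠ p) (hyp : y ≠ p) (hxy : x ≠ y) : oo f p x y ∨ oo f p y x := by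
  suffices h : core f p x y ∨ core f p y x by
    rcases h with h | h
    · exact Or.inl ⟨hxp, hyp, hxy, h⟩
    · exact Or.inr ⟨hyp, hxp, Ne.symm hxy, h⟩
  rcases lt_trichotomy (rnk f p x) (rnk f p y) with h | h | h
  · exact Or.inl (Or.inl h)
  · by_cases ht : tau f x = tau f y
    · rcases lt'_total hor hinj ht hxy with h' | h'
      · exact Or.inl (Or.inr ⟨h, by rw [inr, if_pos ht]; exact h'⟩)
      · exact Or.inr (Or.inr ⟨h.symm, by rw [inr, if_pos ht.symm]; exact h'⟩)
    · by_cases hxp' : tau f x = tau f p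
      · by_cases hyp' : tau f y = tau f p
        · exact absurd (hxp'.trans hyp'.symm) ht
        · exfalso
          rw [rnk, if_pos hxp', rnk, if_neg hyp'] at h
          split_ifs at h <;> omega
      · by_cases hyp' : tau f y = tau f p
        · exfalso
          rw [rnk, if_neg hxp', rnk, if_pos hyp'] at h
          split_ifs at h <;> omega
        · rcases sbtw_total' (Ne.symm hxp') ht (Ne.symm hyp') with hs | hs
          · exact Or.inl (Or.inr ⟨h, by rw [inr, if_neg ht]; exact hs⟩)
          · exact Or.inr (Or.inr ⟨h.symm, by rw [inr, if_neg (Ne.symm ht)]; exact hs⟩)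
  · exact Or.inr (Or.inl h)

lemma oo_trans (hinj : Function.Injective f) {p x y z : G}
    (h1 : oo f p x y) (h2 : oo f p y z) : oo f p x z := by
  obtain ⟨hxp, hyp, hxy, hc1⟩ := h1
  obtain ⟨_, hzp, hyz, hc2⟩ := h2
  have hxz : x ≠ z := by
    rintro rfl
    exact oo_asymm hor ⟨hxp, hyp, hxy, hc1⟩ ⟨hyp, hxp, hyz, hc2⟩
  refine ⟨hxp, hzp, hxz, ?_⟩
  rcases hc1 with h | ⟨he, hi⟩
  · rcases hc2 with h' | ⟨he', hi'⟩
    · exact Or.inl (h.trans h')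
    · exact Or.inl (he' ▸ h)
  · rcases hc2 with h' | ⟨he', hi'⟩
    · exact Or.inl (he ▸ h')
    · refine Or.inr ⟨he.trans he', ?_⟩
      rw [inr] at hi hi' ⊢
      by_cases e1 : tau f x = tau f y <;> by_cases e2 : tau f y = tau f z
      · rw [if_pos e1] at hi
        rw [if_pos e2] at hi'
        rw [if_pos (e1.trans e2)]
        exact lt'_trans hor e1 e2 hi hi'
      · rw [if_pos e1] at hi
        rw [if_neg e2] at hi'
        have e3 : tau f x ≠ tau f z := fun e => e2 (e1.symm.trans e)
        rw [if_neg e3, e1]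
        exact hi'
      · rw [if_neg e1] at hi
        rw [if_pos e2] at hi'
        have e3 : tau f x ≠ tau f z := fun e => e1 (e.trans e2.symm)
        rw [if_neg e3, ← e2]
        exact hi
      · by_cases e3 : tau f x = tau f z
        · exfalso
          rw [if_neg e1] at hi
          rw [if_neg e2] at hi'
          rw [e3] at hi
          exact sbtw_not_swap hi' hi
        · rw [if_neg e1] at hi
          rw [if_neg e2] at hi'
          rw [if_neg e3]
          exact sbtw_trans_right hi hi'

lemma oo_cyc (hinj : Function.Injective f) {p x y : G} (h : oo f p x y) : oo f y p x := by
  obtain ⟨hxp, hyp, hxy, hc⟩ := h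
  refine ⟨Ne.symm hyp, hxy, Ne.symm hxp, ?_⟩
  by_cases e1 : tau f x = tau f p <;> by_cases e2 : tau f y = tau f p
  · -- all in the same class
    have exy : tau f x = tau f y := e1.trans e2.symm
    rw [core, rnk, rnk, if_pos e1, if_pos e2, inr, if_pos exy] at hc
    rw [core, rnk, rnk, if_pos e2.symm, if_pos exy, inr, if_pos e1.symm]
    have tpy := lt'_total hor hinj e2.symm (Ne.symm hyp)
    have txy := lt'_total hor hinj exy hxy
    by_cases hA : lt' f p x <;> by_cases hB : lt' f p y <;> by_cases hC : lt' f x y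
    · have h1 : ¬ lt' f y p := fun h' => lt'_asymm hor e2.symm hB h'
      have h2 : ¬ lt' f y x := fun h' => lt'_asymm hor exy hC h'
      rw [if_neg h1, if_neg h2]
      exact Or.inr ⟨rfl, hA⟩
    · exfalso
      rw [if_pos hA, if_pos hB] at hc
      rcases hc with h | ⟨_, h⟩
      · omega
      · exact hC h
    · exact absurd (lt'_trans hor e1.symm exy hA hC) hB
    · have h1 : lt' f y p := tpy.resolve_left hB
      have h2 : lt' f y x := txy.resolve_left hC
      rw [if_pos h1, if_pos h2]
      exact Or.inr ⟨rfl, hA⟩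
    · exfalso
      rw [if_neg hA, if_pos hB] at hc
      rcases hc with h | ⟨h, _⟩ <;> omega
    · exact absurd (lt'_trans hor e2.symm exy.symm hB (txy.resolve_left hC)) hA
    · have h1 : lt' f y p := tpy.resolve_left hB
      have h2 : ¬ lt' f y x := fun h' => lt'_asymm hor exy hC h'
      rw [if_pos h1, if_neg h2]
      exact Or.inl (by omega)
    · exfalso
      rw [if_neg hA, if_neg hB] at hc
      rcases hc with h | ⟨_, h⟩
      · omega
      · exact hC h
  · -- x in p's class, y not
    rw [core, rnk, rnk, if_pos e1, if_neg e2] at hc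
    have hA : lt' f p x := by
      by_contra hA
      rw [if_neg hA] at hc
      rcases hc with h | ⟨h, _⟩ <;> omega
    have g1 : tau f p ≠ tau f y := fun h => e2 h.symm
    have g2 : tau f x ≠ tau f y := fun h => e2 (h.symm.trans e1)
    rw [core, rnk, rnk, if_neg g1, if_neg g2, inr, if_pos e1.symm]
    exact Or.inr ⟨rfl, hA⟩
  · -- y in p's class, x not
    rw [core, rnk, rnk, if_neg e1, if_pos e2] at hc
    have hB : ¬ lt' f p y := by
      intro hB
      rw [if_pos hB] at hc
      rcases hc with h | ⟨h, _⟩ <;> omega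
    have hyp' : lt' f y p := (lt'_total hor hinj e2 hyp).resolve_right hB
    have g2 : tau f x ≠ tau f y := fun h => e1 (h.trans e2)
    rw [core, rnk, rnk, if_pos e2.symm, if_pos hyp', if_neg g2]
    exact Or.inl (by omega)
  · -- neither in p's class
    by_cases e3 : tau f x = tau f y
    · rw [core, rnk, rnk, if_neg e1, if_neg e2, inr, if_pos e3] at hc
      have hC : lt' f x y := by
        rcases hc with h | ⟨_, h⟩
        · omega
        · exact h
      have hyx' : ¬ lt' f y x := fun h' => lt'_asymm hor e3 hC h'
      have g1 : tau f p ≠ tau f y := fun h => e2 h.symm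
      rw [core, rnk, rnk, if_neg g1, if_pos e3, if_neg hyx']
      exact Or.inl (by omega)
    · rw [core, rnk, rnk, if_neg e1, if_neg e2, inr, if_neg e3] at hc
      have hs : sbtw (tau f p) (tau f x) (tau f y) := by
        rcases hc with h | ⟨_, h⟩
        · omega
        · exact h
      have g1 : tau f p ≠ tau f y := fun h => e2 h.symm
      rw [core, rnk, rnk, if_neg g1, if_neg e3, inr,
        if_neg (fun h => e1 h.symm : ¬ tau f p = tau f x)]
      exact Or.inr ⟨rfl, sbtw_cyclic_right hs⟩

lemma oo_invariant (g p x y : G) : oo f p x y ↔ oo f (g*p) (g*x) (g*y) := by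
  have htau : ∀ a b : G, (tau f (g*a) = tau f (g*b)) ↔ (tau f a = tau f b) := by
    intro a b
    rw [tau_mul, tau_mul]
    exact (f g).injective.eq_iff
  have hrnk : ∀ a b : G, rnk f (g*a) (g*b) = rnk f a b := by
    intro a b
    rw [rnk, rnk]
    by_cases h : tau f b = tau f a
    · rw [if_pos ((htau b a).mpr h), if_pos h, lt'_inv]
    · rw [if_neg (fun h' => h ((htau b a).mp h')), if_neg h]
  have hinr : ∀ a b c : G, inr f (g*a) (g*b) (g*c) ↔ inr f a b c := by
    intro a b c
    rw [inr, inr]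
    by_cases h : tau f b = tau f c
    · rw [if_pos ((htau b c).mpr h), if_pos h, lt'_inv]
    · rw [if_neg (fun h' => h ((htau b c).mp h')), if_neg h, tau_mul, tau_mul, tau_mul]
      exact sbtw_iff hor g
  rw [oo, oo, core, core, hrnk, hrnk, hinr]
  simp only [ne_eq, mul_right_inj]

end

end Stmt19Aux

/-- If a countable group admits a faithful action on the circle `ℝ/ℤ` by
orientation-preserving homeomorphisms, then it admits a left-invariant
circular order. -/
theorem stmt19 {G : Type*} [Group G] [Countable G]
    (f : G →* Equiv.Perm (AddCircle (1 : ℝ)))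
    (hinj : Function.Injective f)
    (hcont : ∀ g : G, Continuous (f g))
    (hor : ∀ (g : G) (a b c : AddCircle (1 : ℝ)),
      sbtw a b c → sbtw (f g a) (f g b) (f g c)) :
    ∃ o : G → G → G → Prop, IsCircularOrderFam o ∧
      ∀ g p x y : G, o p x y ↔ o (g * p) (g * x) (g * y) := by
  classical
  refine ⟨Stmt19Aux.oo f, ⟨?_, ?_, ?_, ?_, ?_, ?_⟩, fun g p x y => Stmt19Aux.oo_invariant hor g p x y⟩
  · exact fun p x y h => ⟨h.1, h.2.1, h.2.2.1⟩
  · exact fun p x y hxp hyp hxy => Stmt19Aux.oo_total hor hinj hxp hyp hxy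
  · exact fun p x y h h' => Stmt19Aux.oo_asymm hor h h'
  · exact fun p x y z h h' => Stmt19Aux.oo_trans hor hinj h h'
  · exact fun p x y h => Stmt19Aux.oo_cyc hor hinj h
  · intro p q x y hpq hxp hxq hyp hyq hxy
    have cy : ∀ a b c : G, Stmt19Aux.oo f a b c → Stmt19Aux.oo f c a b :=
      fun a b c h => Stmt19Aux.oo_cyc hor hinj h
    have tr : ∀ a b c d : G, Stmt19Aux.oo f a b c → Stmt19Aux.oo f a c d → Stmt19Aux.oo f a b d :=
      fun a b c d h h' => Stmt19Aux.oo_trans hor hinj h h'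
    have asym : ∀ a b c : G, Stmt19Aux.oo f a b c → Stmt19Aux.oo f a c b → False :=
      fun a b c h h' => Stmt19Aux.oo_asymm hor h h'
    have tot : ∀ a b c : G, b ≠ a → c ≠ a → b ≠ c →
        Stmt19Aux.oo f a b c ∨ Stmt19Aux.oo f a c b :=
      fun a b c h1 h2 h3 => Stmt19Aux.oo_total hor hinj h1 h2 h3
    constructor
    · intro h1 h2
      -- h1 : o p x q, h2 : o p q y ⊢ o q y x
      have a1 := cy _ _ _ h2   -- o y p q
      have a2 := cy _ _ _ a1   -- o q y p
      have a3 := cy _ _ _ h1   -- o q p x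
      exact tr _ _ _ _ a2 a3
    · intro h1 hn
      by_contra hq
      have hyx : Stmt19Aux.oo f q y x :=
        (tot q x y hxq hyq hxy).resolve_left hq
      rcases tot p x q hxp (Ne.symm hpq) hxq with hxq1 | hqx1
      · rcases tot p q y (Ne.symm hpq) hyp (fun h => hyq h.symm) with h' | h'
        · exact hn ⟨hxq1, h'⟩
        · -- h' : o p y q
          have b1 := cy _ _ _ h'   -- o q p y
          have b2 := cy _ _ _ b1   -- o y q p
          have c1 := cy _ _ _ hyx  -- o x q y
          have c2 := cy _ _ _ c1   -- o y x q
          have d := tr _ _ _ _ c2 b2  -- o y x p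
          have e := cy _ _ _ d     -- o p y x
          exact asym _ _ _ h1 e
      · -- hqx1 : o p q x
        have b1 := cy _ _ _ hqx1  -- o x p q
        have c1 := cy _ _ _ hyx   -- o x q y
        have d := tr _ _ _ _ b1 c1  -- o x p y
        have e1 := cy _ _ _ d     -- o y x p
        have e2 := cy _ _ _ e1    -- o p y x
        exact asym _ _ _ h1 e2
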